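/- For a sequence f₁,…,fₙ of elements in a commutative ring P, the Koszul complex K•(f) is self-dual: for each p with 0 ≤ p ≤ n there are isomorphisms Hₚ(K•(f)) ≅ H^{n-p}(Hom_P(K•(f),P)) between Koszul homology and Koszul cohomology. -/

import Mathlib

/-- Degree-`p` term of the Koszul complex on `n` elements: the free module on the
`p`-element subsets of `Fin n` (a model for `⋀ᵖ Pⁿ`). -/
abbrev KMod (P : Type) [CommRing P] (n p : ℕ) : Type :=
  {s : Finset (Fin n) // s.card = p} → P

/-- The Koszul differential `⋀^{p+1} Pⁿ → ⋀ᵖ Pⁿ` induced by `eᵢ ↦ f i`. -/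
noncomputable def koszulD {P : Type} [CommRing P] {n : ℕ} (f : Fin n → P) (p : ℕ) :
    KMod P n (p + 1) →ₗ[P] KMod P n p where
  toFun x t := ∑ i ∈ (t.1ᶜ).attach,
    (-1 : P) ^ (t.1.filter (fun j => j < i.1)).card * f i.1 *
      x ⟨insert i.1 t.1, by
        rw [Finset.card_insert_of_notMem (Finset.mem_compl.mp i.2), t.2]⟩
  map_add' x y := by
    funext t
    simp [mul_add, Finset.sum_add_distrib]
  map_smul' c x := by
    funext t
    simp [Finset.mul_sum, smul_eq_mul]
    refine Finset.sum_congr rfl fun i _ => by ring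

/-- Koszul cycles. -/
noncomputable def koszulZ {P : Type} [CommRing P] {n : ℕ} (f : Fin n → P) :
    (p : ℕ) → Submodule P (KMod P n p)
  | 0 => ⊤
  | p + 1 => LinearMap.ker (koszulD f p)

/-- Koszul homology `H_p(f)`. -/
abbrev KoszulHomology {P : Type} [CommRing P] {n : ℕ} (f : Fin n → P) (p : ℕ) : Type :=
  ↥(koszulZ f p) ⧸
    Submodule.comap (koszulZ f p).subtype (LinearMap.range (koszulD f p))

/-- The dual (transpose) of the Koszul differential, acting on `Hom_P(K•(f), P)`. -/
noncomputable def koszulDT {P : Type} [CommRing P] {n : ℕ} (f : Fin n → P) (p : ℕ) :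
    (KMod P n p →ₗ[P] P) →ₗ[P] (KMod P n (p + 1) →ₗ[P] P) :=
  (koszulD f p).dualMap

/-- Koszul coboundaries in `Hom(⋀ᵖ Pⁿ, P)`. -/
noncomputable def koszulCB {P : Type} [CommRing P] {n : ℕ} (f : Fin n → P) :
    (p : ℕ) → Submodule P (KMod P n p →ₗ[P] P)
  | 0 => ⊥
  | p + 1 => LinearMap.range (koszulDT f p)

/-- Koszul cohomology `H^p(f) = H^p(Hom_P(K•(f), P))`. -/
abbrev KoszulCohomology {P : Type} [CommRing P] {n : ℕ} (f : Fin n → P) (p : ℕ) : Type :=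
  @HasQuotient.Quotient _ _ (@Submodule.hasQuotient P ↥(LinearMap.ker (koszulDT f p)) _ (Submodule.addCommGroup _) (Submodule.module _))
    (Submodule.comap (LinearMap.ker (koszulDT f p)).subtype (koszulCB f p))




namespace KSD

variable {P : Type} [CommRing P] {n : ℕ}

/-- Number of "inversions" between `s` and its complement. -/
def invNum (s : Finset (Fin n)) : ℕ :=
  ∑ i ∈ s, ((sᶜ).filter (fun j => j < i)).card

lemma filter_lt_card_add (i : Fin n) (s : Finset (Fin n)) :
    (s.filter (fun j => j < i)).card + ((sᶜ).filter (fun j => j < i)).card = i.val := by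
  classical
  rw [← Finset.card_union_of_disjoint
    (Finset.disjoint_filter_filter disjoint_compl_right), ← Finset.filter_union,
    Finset.union_compl]
  have : (Finset.univ.filter (fun j : Fin n => j < i)) = Finset.Iio i := by
    ext j; simp
  rw [this, Fin.card_Iio]

lemma filter_lt_gt_card (i : Fin n) (s : Finset (Fin n)) (hi : i ∉ s) :
    (s.filter (fun j => j < i)).card + (s.filter (fun j => i < j)).card = s.card := by
  classical
  have h2 : s.filter (fun j => i < j) = s.filter (fun j => ¬ j < i) := by
    apply Finset.filter_congr
    intro j hj
    have : j ≠ i := fun h => hi (h ▸ hj)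
    constructor
    · intro h; exact not_lt.mpr (le_of_lt h)
    · intro h; exact lt_of_le_of_ne (not_lt.mp h) (Ne.symm this)
  rw [h2, Finset.card_filter_add_card_filter_not]

lemma invNum_insert {i : Fin n} {s : Finset (Fin n)} (hi : i ∉ s) :
    invNum (insert i s) + s.card = invNum s + i.val := by
  classical
  have hic : i ∈ sᶜ := Finset.mem_compl.mpr hi
  have key : invNum (insert i s) + (s.filter (fun j => i < j)).card
      = ((sᶜ).filter (fun j => j < i)).card + invNum s := by
    unfold invNum
    rw [Finset.sum_insert hi, Finset.compl_insert]
    have h1 : ((sᶜ.erase i).filter (fun j => j < i)).card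
        = ((sᶜ).filter (fun j => j < i)).card := by
      rw [Finset.filter_erase, Finset.erase_eq_of_notMem]
      simp
    have h2 : ∀ a ∈ s, ((sᶜ.erase i).filter (fun j => j < a)).card
        + (if i < a then 1 else 0) = ((sᶜ).filter (fun j => j < a)).card := by
      intro a ha
      rw [Finset.filter_erase]
      by_cases h : i < a
      · rw [if_pos h]
        exact Finset.card_erase_add_one (Finset.mem_filter.mpr ⟨hic, h⟩)
      · rw [if_neg h, add_zero, Finset.erase_eq_of_notMem (by
          intro hmem
          exact h (Finset.mem_filter.mp hmem).2)]
    have h3 : (s.filter (fun j => i < j)).card = ∑ a ∈ s, if i < a then 1 else 0 := by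
      rw [Finset.card_filter]
    rw [h1, h3, add_assoc, add_comm (∑ a ∈ s, ((sᶜ.erase i).filter (fun j => j < a)).card) _,
      add_comm (∑ a ∈ s, _) (∑ a ∈ s, _)]
    rw [← Finset.sum_add_distrib]
    congr 1
    exact Finset.sum_congr rfl h2
  have hA := filter_lt_card_add i s
  have hB := filter_lt_gt_card i s hi
  omega

lemma neg_one_pow_congr {a b : ℕ} (h : a % 2 = b % 2) : ((-1 : P)) ^ a = (-1) ^ b := by
  rcases Nat.even_or_odd a with ha | ha
  · have hb : Even b := Nat.even_iff.mpr (by rw [← h]; exact Nat.even_iff.mp ha)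
    rw [Even.neg_one_pow ha, Even.neg_one_pow hb]
  · have hb : Odd b := Nat.odd_iff.mpr (by rw [← h]; exact Nat.odd_iff.mp ha)
    rw [Odd.neg_one_pow ha, Odd.neg_one_pow hb]


variable (f : Fin n → P)

lemma compl_card {p q : ℕ} (h : p + q = n) {s : Finset (Fin n)} (hs : s.card = p) :
    (sᶜ).card = q := by
  rw [Finset.card_compl, hs, Fintype.card_fin]; omega

/-- Totalization of an element of `KMod P n p` to all finsets. -/
noncomputable def tot {p : ℕ} (x : KMod P n p) : Finset (Fin n) → P :=
  fun s => if h : s.card = p then x ⟨s, h⟩ else 0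

lemma tot_eq {p : ℕ} (x : KMod P n p) {s : Finset (Fin n)} (h : s.card = p) :
    tot x s = x ⟨s, h⟩ := dif_pos h

lemma koszulD_apply {p : ℕ} (x : KMod P n (p + 1)) (t : {s : Finset (Fin n) // s.card = p}) :
    koszulD f p x t = ∑ i ∈ t.1ᶜ,
      (-1 : P) ^ (t.1.filter (fun j => j < i)).card * f i * tot x (insert i t.1) := by
  rw [← Finset.sum_attach (t.1ᶜ) (fun i =>
    (-1 : P) ^ (t.1.filter (fun j => j < i)).card * f i * tot x (insert i t.1))]
  show koszulD f p x t = _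
  simp only [koszulD, LinearMap.coe_mk, AddHom.coe_mk]
  refine Finset.sum_congr rfl fun i _ => ?_
  rw [tot_eq x (by
    rw [Finset.card_insert_of_notMem (Finset.mem_compl.mp i.2), t.2])]

noncomputable def phiMap (p q : ℕ) (h : p + q = n) :
    KMod P n p →ₗ[P] (KMod P n q →ₗ[P] P) :=
  LinearMap.mk₂ P
    (fun x y => ∑ s : {s : Finset (Fin n) // s.card = p},
      (-1 : P) ^ invNum s.1 * x s * y ⟨s.1ᶜ, compl_card h s.2⟩)
    (fun x z y => by
      rw [← Finset.sum_add_distrib]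
      exact Finset.sum_congr rfl fun s _ => by
        simp only [Pi.add_apply]; ring)
    (fun c x y => by
      rw [smul_eq_mul, Finset.mul_sum]
      exact Finset.sum_congr rfl fun s _ => by
        simp only [Pi.smul_apply, smul_eq_mul]; ring)
    (fun x y z => by
      rw [← Finset.sum_add_distrib]
      exact Finset.sum_congr rfl fun s _ => by
        simp only [Pi.add_apply]; ring)
    (fun c x y => by
      rw [smul_eq_mul, Finset.mul_sum]
      exact Finset.sum_congr rfl fun s _ => by
        simp only [Pi.smul_apply, smul_eq_mul]; ring)

lemma phiMap_apply (p q : ℕ) (h : p + q = n) (x : KMod P n p) (y : KMod P n q) :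
    phiMap p q h x y = ∑ s ∈ Finset.univ.filter (fun s : Finset (Fin n) => s.card = p),
      (-1 : P) ^ invNum s * tot x s * tot y sᶜ := by
  rw [phiMap, LinearMap.mk₂_apply]
  calc (∑ s : {s : Finset (Fin n) // s.card = p},
          (-1 : P) ^ invNum s.1 * x s * y ⟨s.1ᶜ, compl_card h s.2⟩)
      = ∑ s : {s : Finset (Fin n) // s.card = p},
          (-1 : P) ^ invNum s.1 * tot x s.1 * tot y (s.1ᶜ) :=
        Finset.sum_congr rfl fun s _ => by
          rw [tot_eq x s.2, tot_eq y (compl_card h s.2)]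
    _ = _ := (Finset.sum_subtype _ (fun s => by simp)
          (fun s => (-1 : P) ^ invNum s * tot x s * tot y sᶜ)).symm

noncomputable def psiMap (p q : ℕ) (h : p + q = n) :
    (KMod P n q →ₗ[P] P) →ₗ[P] KMod P n p where
  toFun φ s := (-1 : P) ^ invNum s.1 * φ (Pi.single ⟨s.1ᶜ, compl_card h s.2⟩ 1)
  map_add' φ ψ := by funext s; simp [mul_add]
  map_smul' c φ := by funext s; simp [smul_eq_mul]; ring

lemma neg_one_pow_mul_self (a : ℕ) : ((-1 : P)) ^ a * (-1) ^ a = 1 := by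
  rw [← pow_add, ← two_mul, pow_mul, neg_one_sq, one_pow]

def complEquiv (p q : ℕ) (h : p + q = n) :
    {s : Finset (Fin n) // s.card = p} ≃ {t : Finset (Fin n) // t.card = q} where
  toFun s := ⟨s.1ᶜ, compl_card h s.2⟩
  invFun t := ⟨t.1ᶜ, compl_card (by omega) t.2⟩
  left_inv s := Subtype.ext (compl_compl s.1)
  right_inv t := Subtype.ext (compl_compl t.1)

lemma phi_psi (p q : ℕ) (h : p + q = n) (φ : KMod P n q →ₗ[P] P) :
    phiMap p q h (psiMap p q h φ) = φ := by
  refine LinearMap.ext fun y => ?_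
  show (∑ s : {s : Finset (Fin n) // s.card = p},
      (-1 : P) ^ invNum s.1 * ((-1 : P) ^ invNum s.1 *
        φ (Pi.single ⟨s.1ᶜ, compl_card h s.2⟩ 1)) * y ⟨s.1ᶜ, compl_card h s.2⟩) = φ y
  have step : ∀ s : {s : Finset (Fin n) // s.card = p},
      (-1 : P) ^ invNum s.1 * ((-1 : P) ^ invNum s.1 *
          φ (Pi.single ⟨s.1ᶜ, compl_card h s.2⟩ 1)) * y ⟨s.1ᶜ, compl_card h s.2⟩
        = φ (Pi.single (⟨s.1ᶜ, compl_card h s.2⟩ : {t : Finset (Fin n) // t.card = q})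
            (y ⟨s.1ᶜ, compl_card h s.2⟩)) := by
    intro s
    have h1 : (Pi.single (⟨s.1ᶜ, compl_card h s.2⟩ : {t : Finset (Fin n) // t.card = q})
        (y ⟨s.1ᶜ, compl_card h s.2⟩)) = y ⟨s.1ᶜ, compl_card h s.2⟩ •
          ((Pi.single (⟨s.1ᶜ, compl_card h s.2⟩ : {t : Finset (Fin n) // t.card = q}) (1 : P)) :
            KMod P n q) := by
      funext u
      by_cases hu : u = ⟨s.1ᶜ, compl_card h s.2⟩ <;>
        simp [Pi.single_apply, hu]
    rw [h1, map_smul, smul_eq_mul]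
    have := neg_one_pow_mul_self (P := P) (invNum s.1)
    calc (-1 : P) ^ invNum s.1 * ((-1 : P) ^ invNum s.1 * φ _) * y ⟨s.1ᶜ, compl_card h s.2⟩
        = ((-1 : P) ^ invNum s.1 * (-1 : P) ^ invNum s.1) *
            (φ (Pi.single ⟨s.1ᶜ, compl_card h s.2⟩ 1) * y ⟨s.1ᶜ, compl_card h s.2⟩) := by ring
      _ = φ (Pi.single ⟨s.1ᶜ, compl_card h s.2⟩ 1) * y ⟨s.1ᶜ, compl_card h s.2⟩ := by
          rw [this, one_mul]
      _ = _ := by ring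
  rw [Finset.sum_congr rfl (fun s _ => step s), ← map_sum]
  congr 1
  exact (Equiv.sum_comp (complEquiv p q h)
    (fun t => (Pi.single t (y t) : KMod P n q))).trans (Finset.univ_sum_single y)

lemma psi_phi (p q : ℕ) (h : p + q = n) (x : KMod P n p) :
    psiMap p q h (phiMap p q h x) = x := by
  funext s
  show (-1 : P) ^ invNum s.1 * (∑ t : {s : Finset (Fin n) // s.card = p},
      (-1 : P) ^ invNum t.1 * x t *
        ((Pi.single (⟨s.1ᶜ, compl_card h s.2⟩ : {t : Finset (Fin n) // t.card = q}) (1:P) :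
            KMod P n q)
          ⟨t.1ᶜ, compl_card h t.2⟩)) = x s
  rw [Finset.sum_eq_single s]
  · rw [Pi.single_apply, if_pos rfl, mul_one, ← mul_assoc, neg_one_pow_mul_self, one_mul]
  · intro t _ hts
    rw [Pi.single_apply, if_neg, mul_zero]
    intro hc
    apply hts
    have : t.1ᶜ = s.1ᶜ := congrArg Subtype.val hc
    exact Subtype.ext (compl_injective this)
  · intro hs; exact absurd (Finset.mem_univ s) hs

noncomputable def phiEquiv (p q : ℕ) (h : p + q = n) :
    KMod P n p ≃ₗ[P] (KMod P n q →ₗ[P] P) :=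
  LinearEquiv.ofLinear (phiMap p q h) (psiMap p q h)
    (LinearMap.ext (phi_psi p q h)) (LinearMap.ext (psi_phi p q h))

lemma sum_pair (p1 : Finset (Fin n) → Prop) [DecidablePred p1]
    (p2 : Finset (Fin n) → Fin n → Prop) [∀ s, DecidablePred (p2 s)]
    (F : Finset (Fin n) → Fin n → P) :
    ∑ z ∈ (Finset.univ ×ˢ Finset.univ).filter
        (fun z : Finset (Fin n) × Fin n => p1 z.1 ∧ p2 z.1 z.2), F z.1 z.2
      = ∑ s ∈ Finset.univ.filter p1, ∑ i ∈ Finset.univ.filter (p2 s), F s i := by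
  simp only [Finset.sum_filter, Finset.sum_product]
  refine Finset.sum_congr rfl fun s _ => ?_
  by_cases h1 : p1 s <;> simp [h1]

lemma key {p q : ℕ} (h : p + 1 + q = n) (h1 : p + (q + 1) = n) (h2 : (p + 1) + q = n)
    (x : KMod P n (p + 1)) (y : KMod P n (q + 1)) :
    phiMap p (q + 1) h1 (koszulD f p x) y
      = (-1 : P) ^ p * phiMap (p + 1) q h2 x (koszulD f q y) := by
  classical
  have lhs_eq : phiMap p (q + 1) h1 (koszulD f p x) y
      = ∑ z ∈ (Finset.univ ×ˢ Finset.univ).filter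
          (fun z : Finset (Fin n) × Fin n => z.1.card = p ∧ z.2 ∈ z.1ᶜ),
        (-1 : P) ^ invNum z.1 * ((-1 : P) ^ (z.1.filter (fun j => j < z.2)).card * f z.2 *
          tot x (insert z.2 z.1)) * tot y (z.1ᶜ) := by
    rw [phiMap_apply, sum_pair (fun s => s.card = p) (fun s i => i ∈ sᶜ)
      (fun s i => (-1 : P) ^ invNum s * ((-1 : P) ^ (s.filter (fun j => j < i)).card * f i *
        tot x (insert i s)) * tot y (sᶜ))]
    refine Finset.sum_congr rfl fun s hs => ?_
    have hsc : s.card = p := (Finset.mem_filter.mp hs).2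
    rw [Finset.filter_univ_mem]
    rw [tot_eq (koszulD f p x) hsc, koszulD_apply f x ⟨s, hsc⟩, Finset.mul_sum,
      Finset.sum_mul]
  have rhs_eq : phiMap (p + 1) q h2 x (koszulD f q y)
      = ∑ z ∈ (Finset.univ ×ˢ Finset.univ).filter
          (fun z : Finset (Fin n) × Fin n => z.1.card = p + 1 ∧ z.2 ∈ z.1),
        (-1 : P) ^ invNum z.1 * tot x z.1 * ((-1 : P) ^ ((z.1ᶜ).filter (fun j => j < z.2)).card
          * f z.2 * tot y (insert z.2 z.1ᶜ)) := by
    rw [phiMap_apply, sum_pair (fun u => u.card = p + 1) (fun u i => i ∈ u)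
      (fun u i => (-1 : P) ^ invNum u * tot x u *
        ((-1 : P) ^ ((uᶜ).filter (fun j => j < i)).card * f i * tot y (insert i uᶜ)))]
    refine Finset.sum_congr rfl fun u hu => ?_
    have huc : u.card = p + 1 := (Finset.mem_filter.mp hu).2
    rw [Finset.filter_univ_mem]
    rw [tot_eq (koszulD f q y) (compl_card h2 huc), koszulD_apply f y ⟨uᶜ, compl_card h2 huc⟩,
      Finset.mul_sum]
    exact Finset.sum_congr (compl_compl u) fun i _ => rfl
  rw [lhs_eq, rhs_eq, Finset.mul_sum]
  refine Finset.sum_nbij' (i := fun z => (insert z.2 z.1, z.2))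
    (j := fun z => (z.1.erase z.2, z.2)) ?_ ?_ ?_ ?_ ?_
  · intro z hz
    obtain ⟨hc, hm⟩ := (Finset.mem_filter.mp hz).2
    refine Finset.mem_filter.mpr ⟨Finset.mem_product.mpr ⟨Finset.mem_univ _, Finset.mem_univ _⟩,
      ?_, Finset.mem_insert_self _ _⟩
    rw [Finset.card_insert_of_notMem (Finset.mem_compl.mp hm), hc]
  · intro z hz
    obtain ⟨hc, hm⟩ := (Finset.mem_filter.mp hz).2
    refine Finset.mem_filter.mpr ⟨Finset.mem_product.mpr ⟨Finset.mem_univ _, Finset.mem_univ _⟩,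
      ?_, Finset.mem_compl.mpr (Finset.notMem_erase _ _)⟩
    rw [Finset.card_erase_of_mem hm, hc]
    omega
  · intro z hz
    obtain ⟨hc, hm⟩ := (Finset.mem_filter.mp hz).2
    refine Prod.ext ?_ rfl
    show (insert z.2 z.1).erase z.2 = z.1
    exact Finset.erase_insert (Finset.mem_compl.mp hm)
  · intro z hz
    obtain ⟨hc, hm⟩ := (Finset.mem_filter.mp hz).2
    refine Prod.ext ?_ rfl
    show insert z.2 (z.1.erase z.2) = z.1
    exact Finset.insert_erase hm
  · intro z hz
    obtain ⟨hc, hm⟩ := (Finset.mem_filter.mp hz).2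
    set s := z.1
    set i := z.2
    have hins : i ∉ s := Finset.mem_compl.mp hm
    have hiscomp : i ∈ sᶜ := hm
    have hins1 : insert i ((insert i s)ᶜ) = sᶜ := by
      rw [Finset.compl_insert, Finset.insert_erase hiscomp]
    have hk : (((insert i s)ᶜ).filter (fun j => j < i)).card
        = ((sᶜ).filter (fun j => j < i)).card := by
      rw [Finset.compl_insert, Finset.filter_erase, Finset.erase_eq_of_notMem]
      intro hmem
      exact absurd (Finset.mem_filter.mp hmem).2 (lt_irrefl i)
    have e1 := invNum_insert hins
    have e2 := filter_lt_card_add i s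
    have hsgn : (-1 : P) ^ invNum s * (-1 : P) ^ (s.filter (fun j => j < i)).card
        = (-1 : P) ^ p * ((-1 : P) ^ invNum (insert i s) *
            (-1 : P) ^ ((sᶜ).filter (fun j => j < i)).card) := by
      rw [← pow_add, ← pow_add, ← pow_add]
      refine neg_one_pow_congr ?_
      omega
    show (-1 : P) ^ invNum s * ((-1 : P) ^ (s.filter (fun j => j < i)).card * f i *
        tot x (insert i s)) * tot y (sᶜ)
      = (-1 : P) ^ p * ((-1 : P) ^ invNum (insert i s) * tot x (insert i s) *
          ((-1 : P) ^ (((insert i s)ᶜ).filter (fun j => j < i)).card * f i *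
            tot y (insert i ((insert i s)ᶜ))))
    rw [hins1, hk]
    linear_combination (f i * tot x (insert i s) * tot y (sᶜ)) * hsgn

lemma isEmpty_over : IsEmpty {s : Finset (Fin n) // s.card = n + 1} := by
  refine ⟨fun s => ?_⟩
  have h1 := Finset.card_le_univ s.1
  rw [s.2, Fintype.card_fin] at h1
  omega

lemma kmod_over_eq_zero (x : KMod P n (n + 1)) : x = 0 :=
  funext fun s => (isEmpty_over.elim s)

lemma koszulDT_apply (q : ℕ) (ψ : KMod P n q →ₗ[P] P) (y : KMod P n (q + 1)) :
    koszulDT f q ψ y = ψ (koszulD f q y) := rfl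

lemma neg_one_pow_mul_cancel {a : ℕ} {t : P} (h : (-1 : P) ^ a * t = 0) : t = 0 := by
  have : (-1 : P) ^ a * ((-1 : P) ^ a * t) = 0 := by rw [h, mul_zero]
  rwa [← mul_assoc, neg_one_pow_mul_self, one_mul] at this

end KSD

/-- **Self-duality of the Koszul complex.** For a sequence `f = (f₁, …, fₙ)` of elements
of a commutative ring `P` and each `0 ≤ p ≤ n`, the Koszul homology `Hₚ(K•(f))` is
isomorphic to the Koszul cohomology `H^{n-p}(Hom_P(K•(f), P))`. -/
theorem koszul_homology_iso_cohomology (P : Type) [CommRing P] (n : ℕ) (f : Fin n → P)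
    (p : ℕ) (hp : p ≤ n) :
    Nonempty (KoszulHomology f p ≃ₗ[P] KoszulCohomology f (n - p)) := by
  classical
  obtain ⟨q, hpq⟩ : ∃ q, p + q = n := ⟨n - p, by omega⟩
  have hnp : n - p = q := by omega
  rw [hnp]
  set E := KSD.phiEquiv (P := P) (n := n) p q hpq with hE
  -- membership transfer for cycles
  have hmem : ∀ x : KMod P n p,
      x ∈ koszulZ f p ↔ KSD.phiMap p q hpq x ∈ LinearMap.ker (koszulDT f q) := by
    rcases p with _ | p'
    · intro x
      obtain rfl : q = n := by omega
      simp only [koszulZ, Submodule.mem_top, true_iff, LinearMap.mem_ker]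
      refine LinearMap.ext fun z => ?_
      rw [KSD.kmod_over_eq_zero z, map_zero, LinearMap.zero_apply]
    · intro x
      have h : p' + 1 + q = n := by omega
      constructor
      · intro hx
        have hx0 : koszulD f p' x = 0 := hx
        refine LinearMap.mem_ker.mpr (LinearMap.ext fun y => ?_)
        rw [KSD.koszulDT_apply]
        have hk := KSD.key f h (by omega) hpq x y
        rw [hx0, map_zero, LinearMap.zero_apply] at hk
        have := KSD.neg_one_pow_mul_cancel (a := p') hk.symm
        simpa using this
      · intro hx
        have hzero : ∀ y, KSD.phiMap p' (q + 1) (by omega) (koszulD f p' x) y = 0 := by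
          intro y
          have hk := KSD.key f h (by omega) hpq x y
          have h0 : KSD.phiMap (p' + 1) q hpq x (koszulD f q y) = 0 := by
            have hker : koszulDT f q (KSD.phiMap (p' + 1) q hpq x) = 0 :=
              LinearMap.mem_ker.mp hx
            have h2 := congrArg (fun ψ : KMod P n (q + 1) →ₗ[P] P => ψ y) hker
            simpa [KSD.koszulDT_apply] using h2
          rw [hk, h0, mul_zero]
        have hmap0 : KSD.phiMap p' (q + 1) (by omega) (koszulD f p' x) = 0 :=
          LinearMap.ext fun y => by rw [hzero y]; rfl
        have hinj := (KSD.phiEquiv (P := P) (n := n) p' (q + 1) (by omega)).injective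
        have hd0 : koszulD f p' x = 0 := by
          apply hinj
          rw [map_zero]
          show KSD.phiMap p' (q + 1) (by omega) (koszulD f p' x) = 0
          exact hmap0
        exact LinearMap.mem_ker.mpr hd0
  have claim1 : Submodule.map (E : KMod P n p →ₗ[P] (KMod P n q →ₗ[P] P)) (koszulZ f p)
      = LinearMap.ker (koszulDT f q) := by
    ext φ
    constructor
    · rintro ⟨x, hx, rfl⟩
      exact (hmem x).mp hx
    · intro hφ
      refine ⟨E.symm φ, ?_, E.apply_symm_apply φ⟩
      apply (hmem (E.symm φ)).mpr
      have : KSD.phiMap p q hpq (E.symm φ) = φ := E.apply_symm_apply φ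
      rw [this]
      exact hφ
  -- boundaries transfer
  have claim2 : Submodule.map (E : KMod P n p →ₗ[P] (KMod P n q →ₗ[P] P))
      (LinearMap.range (koszulD f p)) = koszulCB f q := by
    rcases q with _ | q'
    · have hpn : p = n := by omega
      subst hpn
      have hr : LinearMap.range (koszulD f p) = ⊥ := by
        rw [LinearMap.range_eq_bot]
        refine LinearMap.ext fun z => ?_
        rw [KSD.kmod_over_eq_zero (P := P) (n := p) z, map_zero, LinearMap.zero_apply]
      rw [hr, Submodule.map_bot]
      rfl
    · have h : p + 1 + q' = n := by omega
      ext φ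
      constructor
      · rintro ⟨w, ⟨z, rfl⟩, rfl⟩
        show E (koszulD f p z) ∈ LinearMap.range (koszulDT f q')
        refine ⟨(-1 : P) ^ p • KSD.phiMap (p + 1) q' (by omega) z, ?_⟩
        refine LinearMap.ext fun y => ?_
        rw [map_smul, LinearMap.smul_apply, KSD.koszulDT_apply, smul_eq_mul]
        exact (KSD.key f h hpq (by omega) z y).symm
      · rintro ⟨ψ, rfl⟩
        set z := (KSD.phiEquiv (P := P) (n := n) (p + 1) q' (by omega)).symm
          ((-1 : P) ^ p • ψ) with hz
        refine ⟨koszulD f p z, ⟨z, rfl⟩, ?_⟩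
        refine LinearMap.ext fun y => ?_
        show KSD.phiMap p (q' + 1) hpq (koszulD f p z) y = koszulDT f q' ψ y
        rw [KSD.key f h hpq (by omega) z y, KSD.koszulDT_apply]
        have hzap : KSD.phiMap (p + 1) q' (by omega) z = (-1 : P) ^ p • ψ :=
          (KSD.phiEquiv (P := P) (n := n) (p + 1) q' (by omega)).apply_symm_apply _
        rw [hzap, LinearMap.smul_apply, smul_eq_mul, ← mul_assoc,
          KSD.neg_one_pow_mul_self, one_mul]
  -- assemble
  let e₁ : ↥(koszulZ f p) ≃ₗ[P] ↥(LinearMap.ker (koszulDT f q)) :=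
    (E.submoduleMap (koszulZ f p)).trans (LinearEquiv.ofEq _ _ claim1)
  refine ⟨Submodule.Quotient.equiv _ _ e₁ ?_⟩
  ext ⟨φ, hφ⟩
  simp only [Submodule.mem_map, Submodule.mem_comap, Submodule.coe_subtype]
  constructor
  · rintro ⟨⟨x, hxZ⟩, hx, hex⟩
    have hEx : (↑E : KMod P n p →ₗ[P] (KMod P n q →ₗ[P] P)) x = φ :=
      congrArg Subtype.val hex
    rw [← claim2]
    exact ⟨x, hx, hEx⟩
  · intro hφCB
    rw [← claim2] at hφCB
    obtain ⟨x, hxR, hEx⟩ := hφCB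
    have hxZ : x ∈ koszulZ f p := by
      have hφker : φ ∈ LinearMap.ker (koszulDT f q) := hφ
      rw [← claim1] at hφker
      obtain ⟨w, hwZ, hEw⟩ := hφker
      have : w = x := E.injective
        (show E w = E x from by
          rw [show E w = φ from hEw, show E x = φ from hEx])
      rwa [this] at hwZ
    exact ⟨⟨x, hxZ⟩, hxR, Subtype.ext hEx⟩
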